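/- Let λ : (0,S) → ℝ be a C¹ function satisfying -λ'(s) ≥ (n-m)κ(s) + λ(s)²/(n-m) on (0,S) with limsup_{s→0⁺} s·λ(s) ≤ n - m, where n - m > 0 and κ is continuous. If the first positive zero δ_κ of the Jacobi solution 𝔰_κ is finite, then S ≤ δ_κ; i.e., λ cannot remain finite beyond δ_κ. -/

import Mathlib

open Set Filter

open Topology MeasureTheory intervalIntegral


/-- Forward no-crossing: if `f < g` at `s₀` and at every equality point the derivative of
`f` is strictly less than that of `g`, then `f < g` on `[s₀, b)`. -/
lemma no_cross_fwd {f g fd gd : ℝ → ℝ} {a b s₀ : ℝ}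
    (hs₀ : s₀ ∈ Ioo a b)
    (hf : ∀ s ∈ Ioo a b, HasDerivAt f (fd s) s)
    (hg : ∀ s ∈ Ioo a b, HasDerivAt g (gd s) s)
    (hcr : ∀ s ∈ Ioo a b, f s = g s → fd s < gd s)
    (h0 : f s₀ < g s₀) : ∀ x ∈ Ico s₀ b, f x < g x := by
  intro x hx
  by_contra hcon
  push_neg at hcon
  -- d = g - f
  set d : ℝ → ℝ := fun s => g s - f s with hd
  have hIoo : Icc s₀ x ⊆ Ioo a b := fun t ht =>
    ⟨lt_of_lt_of_le hs₀.1 ht.1, lt_of_le_of_lt ht.2 hx.2⟩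
  have hdD : ∀ s ∈ Ioo a b, HasDerivAt d (gd s - fd s) s := fun s hs =>
    (hg s hs).sub (hf s hs)
  have hdc : ∀ s ∈ Ioo a b, ContinuousAt d s := fun s hs => (hdD s hs).continuousAt
  set T : Set ℝ := {t ∈ Icc s₀ x | d t ≤ 0} with hT
  have hTne : T.Nonempty := ⟨x, ⟨hx.1, le_refl x⟩, by simp [hd, hcon]⟩
  have hTbdd : BddBelow T := ⟨s₀, fun t ht => ht.1.1⟩
  have hTclosed : IsClosed T := by
    have hco : ContinuousOn d (Icc s₀ x) := fun t ht => (hdc t (hIoo ht)).continuousWithinAt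
    have : T = Icc s₀ x ∩ d ⁻¹' (Iic 0) := by
      ext t; simp [hT, and_comm]
    rw [this]
    exact hco.preimage_isClosed_of_isClosed isClosed_Icc isClosed_Iic
  set t₁ := sInf T with ht₁
  have ht₁T : t₁ ∈ T := hTclosed.csInf_mem hTne hTbdd
  have ht₁I : t₁ ∈ Icc s₀ x := ht₁T.1
  have ht₁ab : t₁ ∈ Ioo a b := hIoo ht₁I
  have hne : t₁ ≠ s₀ := by
    intro h
    have := ht₁T.2
    rw [h] at this
    simp only [hd] at this
    linarith
  have hs₀t₁ : s₀ < t₁ := lt_of_le_of_ne ht₁I.1 (Ne.symm hne)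
  -- on [s₀, t₁), d > 0
  have hpos : ∀ t ∈ Ico s₀ t₁, 0 < d t := by
    intro t ht
    by_contra hc
    push_neg at hc
    have : t ∈ T := ⟨⟨ht.1, le_trans ht.2.le ht₁I.2⟩, hc⟩
    exact absurd (csInf_le hTbdd this) (not_le.mpr ht.2)
  -- limit filter
  have hNB : (𝓝[Ioo s₀ t₁] t₁).NeBot := by
    apply mem_closure_iff_nhdsWithin_neBot.mp
    rw [closure_Ioo (ne_of_lt hs₀t₁)]
    exact ⟨hs₀t₁.le, le_refl _⟩
  -- d t₁ ≥ 0 by continuity from the left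
  have hd₁0 : 0 ≤ d t₁ := by
    have : Tendsto d (𝓝[Ioo s₀ t₁] t₁) (𝓝 (d t₁)) :=
      ((hdc t₁ ht₁ab).continuousWithinAt)
    exact ge_of_tendsto this (eventually_nhdsWithin_of_forall
      (fun t ht => (hpos t ⟨ht.1.le, ht.2⟩).le))
  have hd₁ : d t₁ = 0 := le_antisymm ht₁T.2 hd₁0
  have hfg : f t₁ = g t₁ := by
    have := hd₁; simp only [hd] at this; linarith
  have hder : fd t₁ < gd t₁ := hcr t₁ ht₁ab hfg
  -- slope of d at t₁ from left is ≤ 0 (d positive left, t - t₁ < 0)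
  have hslope : Tendsto (slope d t₁) (𝓝[≠] t₁) (𝓝 (gd t₁ - fd t₁)) :=
    hasDerivAt_iff_tendsto_slope.mp (hdD t₁ ht₁ab)
  have hslope' : Tendsto (slope d t₁) (𝓝[Ioo s₀ t₁] t₁) (𝓝 (gd t₁ - fd t₁)) :=
    hslope.mono_left (nhdsWithin_mono _ (fun t ht => ne_of_lt ht.2))
  have : gd t₁ - fd t₁ ≤ 0 := by
    refine le_of_tendsto hslope' (eventually_nhdsWithin_of_forall (fun t ht => ?_))
    have h1 : 0 < d t := hpos t ⟨ht.1.le, ht.2⟩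
    have h2 : t - t₁ < 0 := by linarith [ht.2]
    rw [slope_def_field]
    apply div_nonpos_of_nonneg_of_nonpos
    · simp [hd₁]; linarith
    · linarith
  linarith

/-- Backward no-crossing: if `f < g` at `s₀` and at every equality point the derivative of
`f` is strictly greater than that of `g`, then `f < g` on `(a, s₀]`. -/
lemma no_cross_bwd {f g fd gd : ℝ → ℝ} {a b s₀ : ℝ}
    (hs₀ : s₀ ∈ Ioo a b)
    (hf : ∀ s ∈ Ioo a b, HasDerivAt f (fd s) s)
    (hg : ∀ s ∈ Ioo a b, HasDerivAt g (gd s) s)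
    (hcr : ∀ s ∈ Ioo a b, f s = g s → gd s < fd s)
    (h0 : f s₀ < g s₀) : ∀ x ∈ Ioc a s₀, f x < g x := by
  intro x hx
  by_contra hcon
  push_neg at hcon
  set d : ℝ → ℝ := fun s => g s - f s with hd
  have hIoo : Icc x s₀ ⊆ Ioo a b := fun t ht =>
    ⟨lt_of_lt_of_le hx.1 ht.1, lt_of_le_of_lt ht.2 hs₀.2⟩
  have hdD : ∀ s ∈ Ioo a b, HasDerivAt d (gd s - fd s) s := fun s hs =>
    (hg s hs).sub (hf s hs)
  have hdc : ∀ s ∈ Ioo a b, ContinuousAt d s := fun s hs => (hdD s hs).continuousAt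
  set T : Set ℝ := {t ∈ Icc x s₀ | d t ≤ 0} with hT
  have hTne : T.Nonempty := ⟨x, ⟨le_refl x, hx.2⟩, by simp [hd, hcon]⟩
  have hTbdd : BddAbove T := ⟨s₀, fun t ht => ht.1.2⟩
  have hTclosed : IsClosed T := by
    have hco : ContinuousOn d (Icc x s₀) := fun t ht => (hdc t (hIoo ht)).continuousWithinAt
    have : T = Icc x s₀ ∩ d ⁻¹' (Iic 0) := by
      ext t; simp [hT, and_comm]
    rw [this]
    exact hco.preimage_isClosed_of_isClosed isClosed_Icc isClosed_Iic
  set t₁ := sSup T with ht₁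
  have ht₁T : t₁ ∈ T := hTclosed.csSup_mem hTne hTbdd
  have ht₁I : t₁ ∈ Icc x s₀ := ht₁T.1
  have ht₁ab : t₁ ∈ Ioo a b := hIoo ht₁I
  have hne : t₁ ≠ s₀ := by
    intro h
    have := ht₁T.2
    rw [h] at this
    simp only [hd] at this
    linarith
  have ht₁s₀ : t₁ < s₀ := lt_of_le_of_ne ht₁I.2 hne
  have hpos : ∀ t ∈ Ioc t₁ s₀, 0 < d t := by
    intro t ht
    by_contra hc
    push_neg at hc
    have : t ∈ T := ⟨⟨le_trans ht₁I.1 ht.1.le, ht.2⟩, hc⟩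
    exact absurd (le_csSup hTbdd this) (not_le.mpr ht.1)
  have hNB : (𝓝[Ioo t₁ s₀] t₁).NeBot := by
    apply mem_closure_iff_nhdsWithin_neBot.mp
    rw [closure_Ioo (ne_of_lt ht₁s₀)]
    exact ⟨le_refl _, ht₁s₀.le⟩
  have hd₁0 : 0 ≤ d t₁ := by
    have : Tendsto d (𝓝[Ioo t₁ s₀] t₁) (𝓝 (d t₁)) :=
      ((hdc t₁ ht₁ab).continuousWithinAt)
    exact ge_of_tendsto this (eventually_nhdsWithin_of_forall
      (fun t ht => (hpos t ⟨ht.1, ht.2.le⟩).le))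
  have hd₁ : d t₁ = 0 := le_antisymm ht₁T.2 hd₁0
  have hfg : f t₁ = g t₁ := by
    have := hd₁; simp only [hd] at this; linarith
  have hder : gd t₁ < fd t₁ := hcr t₁ ht₁ab hfg
  have hslope : Tendsto (slope d t₁) (𝓝[≠] t₁) (𝓝 (gd t₁ - fd t₁)) :=
    hasDerivAt_iff_tendsto_slope.mp (hdD t₁ ht₁ab)
  have hslope' : Tendsto (slope d t₁) (𝓝[Ioo t₁ s₀] t₁) (𝓝 (gd t₁ - fd t₁)) :=
    hslope.mono_left (nhdsWithin_mono _ (fun t ht => ne_of_gt ht.1))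
  have : 0 ≤ gd t₁ - fd t₁ := by
    refine ge_of_tendsto hslope' (eventually_nhdsWithin_of_forall (fun t ht => ?_))
    have h1 : 0 < d t := hpos t ⟨ht.1, ht.2.le⟩
    have h2 : 0 < t - t₁ := by linarith [ht.1]
    rw [slope_def_field]
    apply div_nonneg _ h2.le
    simp [hd₁]; linarith
  linarith



set_option maxHeartbeats 1600000 in
/-- Under the Riccati differential inequality
-λ' ≥ (n-m)κ + λ²/(n-m) on (0,S) with limsup_{s→0⁺} s·λ(s) ≤ n-m, if the first
positive zero δ_κ of the Jacobi solution 𝔰_κ is finite, then S ≤ δ_κ: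
λ cannot remain finite beyond δ_κ. -/
theorem riccati_explosion
    (n m S : ℝ) (hnm : 0 < n - m) (hS : 0 < S)
    (κ lam lamd 𝔰 𝔰d : ℝ → ℝ)
    (hκ : ContinuousOn κ (Ici 0))
    (hlam : ∀ s ∈ Ioo 0 S, HasDerivAt lam (lamd s) s)
    (hlamd : ContinuousOn lamd (Ioo 0 S))
    (hRic : ∀ s ∈ Ioo 0 S, (n - m) * κ s + (lam s) ^ 2 / (n - m) ≤ -lamd s)
    (hlimsup : limsup (fun s => s * lam s) (nhdsWithin 0 (Ioi 0)) ≤ n - m)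
    (h𝔰 : ∀ t, HasDerivAt 𝔰 (𝔰d t) t)
    (h𝔰d : ∀ t, HasDerivAt 𝔰d (-(κ t * 𝔰 t)) t)
    (h0 : 𝔰 0 = 0) (h0' : 𝔰d 0 = 1)
    (hne : {s : ℝ | 0 < s ∧ 𝔰 s = 0}.Nonempty) :
    S ≤ sInf {s : ℝ | 0 < s ∧ 𝔰 s = 0} := by
  by_contra hcontra
  push_neg at hcontra
  set Z := {s : ℝ | 0 < s ∧ 𝔰 s = 0} with hZ
  set δ := sInf Z with hδ
  have hδS : δ < S := hcontra
  have hZbdd : BddBelow Z := ⟨0, fun z hz => hz.1.le⟩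
  have hZlb : ∀ z ∈ Z, δ ≤ z := fun z hz => csInf_le hZbdd hz
  have hc𝔰 : Continuous 𝔰 := by
    rw [continuous_iff_continuousAt]; exact fun t => (h𝔰 t).continuousAt
  have hc𝔰d : Continuous 𝔰d := by
    rw [continuous_iff_continuousAt]; exact fun t => (h𝔰d t).continuousAt
  -- slope of 𝔰 at 0 tends to 1
  have hslope0 : Tendsto (fun s => 𝔰 s / s) (𝓝[>] (0:ℝ)) (𝓝 1) := by
    have := hasDerivAt_iff_tendsto_slope.mp (h𝔰 0)
    rw [h0'] at this
    have h2 : Tendsto (slope 𝔰 0) (𝓝[>] (0:ℝ)) (𝓝 1) :=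
      this.mono_left (nhdsWithin_mono _ (fun t ht => ne_of_gt ht))
    refine h2.congr (fun s => ?_)
    rw [slope_def_field, h0]
    ring_nf
  -- 𝔰 positive on a right neighborhood of 0
  have hsmall : ∀ᶠ s in 𝓝[>] (0:ℝ), 0 < 𝔰 s := by
    have : ∀ᶠ s in 𝓝[>] (0:ℝ), (1:ℝ)/2 < 𝔰 s / s :=
      hslope0.eventually (eventually_gt_nhds (by norm_num))
    filter_upwards [this, self_mem_nhdsWithin] with s h1 h2
    have hs0 : (0:ℝ) < s := h2
    have := (lt_div_iff₀ hs0).mp h1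
    linarith
  obtain ⟨u, hu0, huP⟩ : ∃ u > 0, ∀ s ∈ Ioo 0 u, 0 < 𝔰 s := by
    obtain ⟨u, hu, hsub⟩ := mem_nhdsGT_iff_exists_Ioo_subset.mp hsmall
    exact ⟨u, hu, fun s hs => hsub hs⟩
  have hδpos : 0 < δ := by
    refine lt_of_lt_of_le hu0 (le_csInf hne (fun z hz => ?_))
    by_contra hzu
    push_neg at hzu
    exact absurd hz.2 (ne_of_gt (huP z ⟨hz.1, hzu⟩))
  have h𝔰δ : 𝔰 δ = 0 := by
    have h1 : δ ∈ closure Z := csInf_mem_closure hne hZbdd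
    have h2 : IsClosed {s : ℝ | 𝔰 s = 0} := isClosed_eq hc𝔰 continuous_const
    have h3 : closure Z ⊆ {s : ℝ | 𝔰 s = 0} :=
      closure_minimal (fun z hz => hz.2) h2
    exact h3 h1
  have h𝔰pos : ∀ s ∈ Ioo 0 δ, 0 < 𝔰 s := by
    intro s hs
    rcases lt_trichotomy (𝔰 s) 0 with hneg | hzero | hpos
    · exfalso
      set t := min u s / 2 with htdef
      have ht0 : 0 < t := by
        rw [htdef]; have := lt_min hu0 hs.1; positivity
      have htu : t < u := by
        have := min_le_left u s; simp only [htdef]; linarith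
      have hts : t < s := by
        have := min_le_right u s; simp only [htdef]; linarith [hs.1]
      have h𝔰t : 0 < 𝔰 t := huP t ⟨ht0, htu⟩
      have hivt := intermediate_value_uIcc (a := t) (b := s) hc𝔰.continuousOn
      have h0mem : (0:ℝ) ∈ uIcc (𝔰 t) (𝔰 s) := by
        rw [mem_uIcc]; right; constructor <;> linarith
      obtain ⟨r, hrI, hr0⟩ := hivt h0mem
      rw [uIcc_of_le hts.le] at hrI
      have hrZ : r ∈ Z := ⟨lt_of_lt_of_le ht0 hrI.1, hr0⟩
      exact absurd (hZlb r hrZ) (not_le.mpr (lt_of_le_of_lt hrI.2 hs.2))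
    · exfalso
      have : s ∈ Z := ⟨hs.1, hzero⟩
      exact absurd (hZlb s this) (not_le.mpr hs.2)
    · exact hpos
  clear_value δ
  -- interval endpoint a₀ and curvature bound K
  set a₀ := (δ + S)/2 with ha₀
  have hδa₀ : δ < a₀ := by rw [ha₀]; linarith
  have ha₀S : a₀ < S := by rw [ha₀]; linarith
  have ha₀pos : 0 < a₀ := lt_trans hδpos hδa₀
  clear_value a₀
  obtain ⟨K, hK0, hK⟩ : ∃ K, 0 ≤ K ∧ ∀ t ∈ Icc (0:ℝ) a₀, -κ t ≤ K := by
    obtain ⟨K, hK⟩ := isCompact_Icc.exists_bound_of_continuousOn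
      (hκ.mono (fun t (ht : t ∈ Icc (0:ℝ) a₀) => ht.1))
    refine ⟨max K 0, le_max_right _ _, fun t ht => ?_⟩
    have := hK t ht
    rw [Real.norm_eq_abs] at this
    have h2 := abs_le.mp this
    have h3 := le_max_left K 0
    linarith [h2.1, h2.2]
  set D := (n-m)*K/3 + 1 with hD
  have hDpos : 0 < D := by
    have h9 : 0 ≤ (n-m)*K := mul_nonneg hnm.le hK0
    rw [hD]
    linarith
  clear_value D
  have hRic2 : ∀ s ∈ Ioo 0 a₀, lamd s ≤ (n-m)*K - lam s^2/(n-m) := by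
    intro s hs
    have h1 := hRic s ⟨hs.1, lt_trans hs.2 ha₀S⟩
    have h2 := hK s ⟨hs.1.le, hs.2.le⟩
    nlinarith [mul_nonneg hnm.le (by linarith : (0:ℝ) ≤ K + κ s)]
  -- the key derivative inequality at crossing points, for any pole location a
  have hcross : ∀ q P : ℝ, 0 < P → q * P = (n-m) + D*P^2 →
      (n-m)*K - q^2/(n-m) < -((n-m)/P^2) + D := by
    intro q P hP he
    have hPne : P ≠ 0 := ne_of_gt hP
    have hq : q = (n-m)/P + D*P := by
      field_simp
      linarith [he]
    have expand : ((n-m)/P + D*P)^2/(n-m) = (n-m)/P^2 + 2*D + D^2*P^2/(n-m) := by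
      field_simp
      ring
    rw [hq, expand]
    have h3D : 3*D = (n-m)*K + 3 := by rw [hD]; ring
    have hpos2 : 0 < D^2*P^2/(n-m) := by positivity
    linarith
  -- the barrier family
  set bb : ℝ → ℝ → ℝ := fun a s => (n-m)/(s-a) + D*(s-a) with hbb
  have hbder : ∀ a s : ℝ, s ≠ a → HasDerivAt (bb a) (-((n-m)/(s-a)^2) + D) s := by
    intro a s hsa
    have h1 : HasDerivAt (fun t : ℝ => t - a) 1 s := (hasDerivAt_id s).sub_const a
    have h2 : HasDerivAt (fun t : ℝ => (n-m)/(t-a)) ((0*(s-a) - (n-m)*1)/(s-a)^2) s :=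
      (hasDerivAt_const s (n-m)).div h1 (sub_ne_zero.mpr hsa)
    have h3 : HasDerivAt (fun t : ℝ => D*(t-a)) (D*1) s := h1.const_mul D
    have h4 := h2.add h3
    refine h4.congr_deriv ?_
    have : (s-a) ≠ 0 := sub_ne_zero.mpr hsa
    field_simp
    ring
  -- crossing condition, valid for any pole a, at points s ∈ Ioo 0 a₀ with s ≠ a
  have hcr : ∀ a : ℝ, ∀ s ∈ Ioo 0 a₀, s ≠ a → lam s = bb a s →
      lamd s < -((n-m)/(s-a)^2) + D := by
    intro a s hs hsa heq
    have h2 := hRic2 s hs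
    rcases lt_or_gt_of_ne hsa with hlt | hgt
    · have hP : 0 < a - s := by linarith
      have hqP : (-(bb a s)) * (a - s) = (n-m) + D*(a-s)^2 := by
        rw [hbb]
        have : (s-a) ≠ 0 := sub_ne_zero.mpr hsa
        field_simp
        ring
      have h5 := hcross (-(bb a s)) (a - s) hP hqP
      have hsq : (-(bb a s))^2 = (lam s)^2 := by rw [heq]; ring
      have hPP : (a - s)^2 = (s - a)^2 := by ring
      rw [hsq, hPP] at h5
      linarith
    · have hP : 0 < s - a := by linarith
      have hqP : (bb a s) * (s - a) = (n-m) + D*(s-a)^2 := by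
        rw [hbb]
        have : (s-a) ≠ 0 := sub_ne_zero.mpr hsa
        field_simp
      have h5 := hcross (bb a s) (s - a) hP hqP
      rw [← heq] at h5
      linarith
  -- tendsto facts at a pole a (from the left): bb a → -∞
  have hbbBot : ∀ a : ℝ, Tendsto (bb a) (𝓝[<] a) atBot := by
    intro a
    have h1 : Tendsto (fun s => a - s) (𝓝[<] a) (𝓝[>] (0:ℝ)) := by
      rw [tendsto_nhdsWithin_iff]
      constructor
      · have : Tendsto (fun s => a - s) (𝓝 a) (𝓝 (a - a)) :=
          (continuous_const.sub continuous_id).tendsto a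
        rw [sub_self] at this
        exact this.mono_left nhdsWithin_le_nhds
      · exact eventually_nhdsWithin_of_forall (fun s hs => by simp [mem_Ioi]; linarith [mem_Iio.mp hs])
    have h2 : Tendsto (fun s => (a - s)⁻¹) (𝓝[<] a) atTop :=
      tendsto_inv_nhdsGT_zero.comp h1
    have h3 : Tendsto (fun s => (n-m) * (a - s)⁻¹) (𝓝[<] a) atTop :=
      h2.const_mul_atTop hnm
    have h4 : Tendsto (fun s => -((n-m) * (a - s)⁻¹)) (𝓝[<] a) atBot :=
      tendsto_neg_atTop_atBot.comp h3
    refine tendsto_atBot_mono' _ ?_ h4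
    filter_upwards [self_mem_nhdsWithin] with s hs
    have h5 : s - a < 0 := by simpa [sub_neg] using (mem_Iio.mp hs)
    have hne0 : s - a ≠ 0 := ne_of_lt h5
    have hane : a - s ≠ 0 := fun h => hne0 (by linarith)
    have h6 : bb a s = -((n-m) * (a-s)⁻¹) + D*(s-a) := by
      show (n-m)/(s-a) + D*(s-a) = _
      field_simp
      ring
    rw [h6]
    have h7 : D * (s - a) < 0 := mul_neg_of_pos_of_neg hDpos h5
    exact add_le_of_nonpos_right h7.le
  -- from the right: bb a → +∞
  have hbbTop : ∀ a : ℝ, Tendsto (bb a) (𝓝[>] a) atTop := by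
    intro a
    have h1 : Tendsto (fun s => s - a) (𝓝[>] a) (𝓝[>] (0:ℝ)) := by
      rw [tendsto_nhdsWithin_iff]
      constructor
      · have : Tendsto (fun s => s - a) (𝓝 a) (𝓝 (a - a)) :=
          (continuous_id.sub continuous_const).tendsto a
        rw [sub_self] at this
        exact this.mono_left nhdsWithin_le_nhds
      · exact eventually_nhdsWithin_of_forall (fun s hs => by simp [mem_Ioi]; linarith [mem_Ioi.mp hs])
    have h2 : Tendsto (fun s => (s - a)⁻¹) (𝓝[>] a) atTop :=
      tendsto_inv_nhdsGT_zero.comp h1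
    have h3 : Tendsto (fun s => (n-m) * (s - a)⁻¹) (𝓝[>] a) atTop :=
      h2.const_mul_atTop hnm
    refine tendsto_atTop_mono' _ ?_ h3
    filter_upwards [self_mem_nhdsWithin] with s hs
    have h5 : 0 < s - a := sub_pos.mpr (mem_Ioi.mp hs)
    have h6 : bb a s = (n-m) * (s-a)⁻¹ + D*(s-a) := by
      show (n-m)/(s-a) + D*(s-a) = _
      rw [div_eq_mul_inv]
    rw [h6]
    have h7 : 0 < D * (s - a) := mul_pos hDpos h5
    exact le_add_of_nonneg_right h7.le
  -- lower barrier: lam ≥ bb a₀ on (0, a₀)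
  have hlowbar : ∀ s ∈ Ioo 0 a₀, bb a₀ s ≤ lam s := by
    intro s₂ hs₂
    by_contra hlt
    push_neg at hlt
    have hall := no_cross_fwd (a := 0) (b := a₀) hs₂
      (fun s hs => hlam s ⟨hs.1, lt_trans hs.2 ha₀S⟩)
      (fun s hs => hbder a₀ s (ne_of_lt hs.2))
      (fun s hs heq => hcr a₀ s hs (ne_of_lt hs.2) heq) hlt
    have hev : ∀ᶠ s in 𝓝[<] a₀, lam s ≤ bb a₀ s := by
      filter_upwards [Ioo_mem_nhdsLT_of_mem (⟨hs₂.2, le_refl a₀⟩ : a₀ ∈ Ioc s₂ a₀)] with s hs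
      exact (hall s ⟨hs.1.le, hs.2⟩).le
    have hlamBot : Tendsto lam (𝓝[<] a₀) atBot := tendsto_atBot_mono' _ hev (hbbBot a₀)
    have hlamN : Tendsto lam (𝓝[<] a₀) (𝓝 (lam a₀)) :=
      (hlam a₀ ⟨ha₀pos, ha₀S⟩).continuousAt.continuousWithinAt
    exact not_tendsto_atBot_of_tendsto_nhds hlamN hlamBot
  -- upper barrier with pole a > 0
  have hup1 : ∀ s₂ ∈ Ioo 0 a₀, ∀ a ∈ Ioo (0:ℝ) s₂, lam s₂ ≤ bb a s₂ := by
    intro s₂ hs₂ a ha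
    by_contra hlt
    push_neg at hlt
    have hall := no_cross_bwd (a := a) (b := a₀) (s₀ := s₂) ⟨ha.2, hs₂.2⟩
      (fun s hs => hbder a s (ne_of_gt hs.1))
      (fun s hs => hlam s ⟨lt_trans ha.1 hs.1, lt_trans hs.2 ha₀S⟩)
      (fun s hs heq => hcr a s ⟨lt_trans ha.1 hs.1, hs.2⟩ (ne_of_gt hs.1) heq.symm) hlt
    have hev : ∀ᶠ s in 𝓝[>] a, bb a s ≤ lam s := by
      filter_upwards [Ioo_mem_nhdsGT_of_mem (⟨le_refl a, ha.2⟩ : a ∈ Ico a s₂)] with s hs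
      exact (hall s ⟨hs.1, hs.2.le⟩).le
    have hlamTop : Tendsto lam (𝓝[>] a) atTop := tendsto_atTop_mono' _ hev (hbbTop a)
    have hlamN : Tendsto lam (𝓝[>] a) (𝓝 (lam a)) :=
      (hlam a ⟨ha.1, by linarith [ha.2, hs₂.2, ha₀S]⟩).continuousAt.continuousWithinAt
    exact not_tendsto_atTop_of_tendsto_nhds hlamN hlamTop
  -- upper bound: lam s ≤ (n-m)/s + D*s
  have hupbar : ∀ s ∈ Ioo 0 a₀, lam s ≤ (n-m)/s + D*s := by
    intro s₂ hs₂
    have hc0 : ContinuousAt (fun a => bb a s₂) 0 := by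
      have h1 : ContinuousAt (fun a : ℝ => (n-m)/(s₂ - a) + D*(s₂ - a)) 0 := by
        apply ContinuousAt.add
        · apply ContinuousAt.div continuousAt_const (by fun_prop)
          simpa using ne_of_gt hs₂.1
        · fun_prop
      exact h1
    have hcont : Tendsto (fun a => bb a s₂) (𝓝[>] 0) (𝓝 ((n-m)/s₂ + D*s₂)) := by
      have h2 : Tendsto (fun a => bb a s₂) (𝓝 0) (𝓝 (bb 0 s₂)) := hc0.tendsto
      have h3 : bb 0 s₂ = (n-m)/s₂ + D*s₂ := by
        show (n-m)/(s₂ - 0) + D*(s₂ - 0) = _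
        rw [sub_zero]
      rw [h3] at h2
      exact h2.mono_left nhdsWithin_le_nhds
    refine ge_of_tendsto hcont ?_
    filter_upwards [Ioo_mem_nhdsGT_of_mem (⟨le_refl (0:ℝ), hs₂.1⟩ : (0:ℝ) ∈ Ico 0 s₂)] with a ha
    exact hup1 s₂ hs₂ a ha
  -- uniform lower bound on (0, δ]
  set M := (n-m)/(a₀-δ) + D*a₀ with hM
  have haδ : 0 < a₀ - δ := by linarith
  have hMpos : 0 < M := by
    rw [hM]; positivity
  clear_value M
  have hlamM : ∀ s ∈ Ioc 0 δ, -M ≤ lam s := by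
    intro s hs
    have h1 := hlowbar s ⟨hs.1, lt_of_le_of_lt hs.2 hδa₀⟩
    have hP : 0 < a₀ - s := by linarith [hs.2]
    have e1 : bb a₀ s = -((n-m)/(a₀-s) + D*(a₀-s)) := by
      show (n-m)/(s-a₀) + D*(s-a₀) = _
      have h2 : a₀ - s ≠ 0 := ne_of_gt hP
      have h3 : s - a₀ ≠ 0 := fun h => h2 (by linarith)
      field_simp
      ring
    have h2 : (n-m)/(a₀-s) ≤ (n-m)/(a₀-δ) := by
      gcongr
      linarith [hs.2]
    have h3 : D*(a₀-s) ≤ D*a₀ := by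
      have := mul_le_mul_of_nonneg_left (by linarith [hs.1] : a₀ - s ≤ a₀) hDpos.le
      linarith
    rw [e1] at h1
    rw [hM]
    linarith
  -- integrating factor
  have hclam : ∀ s ∈ Ioo 0 S, ContinuousAt lam s := fun s hs => (hlam s hs).continuousAt
  set s₁ := δ/2 with hs₁def
  have hs₁pos : 0 < s₁ := by rw [hs₁def]; linarith
  have hs₁δ : s₁ < δ := by rw [hs₁def]; linarith
  clear_value s₁
  set F := fun s => ∫ t in s₁..s, lam t / (n-m) with hFdef
  have hint : ∀ s ∈ Ioo 0 S, ∀ s' ∈ Ioo 0 S,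
      IntervalIntegrable (fun t => lam t / (n-m)) volume s' s := by
    intro s hs s' hs'
    apply ContinuousOn.intervalIntegrable
    intro t ht
    have hsub : uIcc s' s ⊆ Ioo 0 S := (Set.ordConnected_Ioo).uIcc_subset hs' hs
    exact ((hclam t (hsub ht)).continuousWithinAt.div_const _)
  have hs₁S : s₁ ∈ Ioo 0 S := ⟨hs₁pos, by linarith⟩
  have hFd : ∀ s ∈ Ioo 0 S, HasDerivAt F (lam s / (n-m)) s := by
    intro s hs
    exact intervalIntegral.integral_hasDerivAt_right (hint s hs s₁ hs₁S)
      ((ContinuousOn.stronglyMeasurableAtFilter isOpen_Ioo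
        (fun t ht => ((hclam t ht).continuousWithinAt.div_const _))) s hs)
      ((hclam s hs).div_const _)
  set φ := fun s => Real.exp (F s) * (lam s * 𝔰 s - (n-m) * 𝔰d s) with hφdef
  have hφd : ∀ s ∈ Ioo 0 δ, HasDerivAt φ
      (Real.exp (F s) * (𝔰 s * (lam s^2/(n-m) + lamd s + (n-m)*κ s))) s := by
    intro s hs
    have hsS : s ∈ Ioo 0 S := ⟨hs.1, by linarith [hs.2]⟩
    have hE : HasDerivAt (fun s => Real.exp (F s)) (Real.exp (F s) * (lam s/(n-m))) s :=
      (hFd s hsS).exp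
    have hG : HasDerivAt (fun s => lam s * 𝔰 s - (n-m) * 𝔰d s)
        (lamd s * 𝔰 s + lam s * 𝔰d s - (n-m)*(-(κ s * 𝔰 s))) s :=
      ((hlam s hsS).mul (h𝔰 s)).sub ((h𝔰d s).const_mul (n-m))
    have h4 := hE.mul hG
    refine h4.congr_deriv ?_
    have hne : (n-m) ≠ 0 := ne_of_gt hnm
    field_simp
    ring
  have hφmono : AntitoneOn φ (Ioo 0 δ) := by
    apply antitoneOn_of_deriv_nonpos (convex_Ioo 0 δ)
    · exact fun s hs => (hφd s hs).continuousAt.continuousWithinAt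
    · intro s hs
      rw [interior_Ioo] at hs
      exact (hφd s hs).differentiableAt.differentiableWithinAt
    · intro s hs
      rw [interior_Ioo] at hs
      rw [(hφd s hs).deriv]
      have hsS : s ∈ Ioo 0 S := ⟨hs.1, by linarith [hs.2]⟩
      have hbr : lam s^2/(n-m) + lamd s + (n-m)*κ s ≤ 0 := by
        have := hRic s hsS
        linarith
      have h𝔰s : 0 ≤ 𝔰 s := (h𝔰pos s hs).le
      have : 𝔰 s * (lam s^2/(n-m) + lamd s + (n-m)*κ s) ≤ 0 :=
        mul_nonpos_of_nonneg_of_nonpos h𝔰s hbr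
      exact mul_nonpos_of_nonneg_of_nonpos (Real.exp_pos _).le this
  -- bound on the integrating factor near 0
  set B := Real.exp (M*s₁/(n-m)) with hBdef
  have hBpos : 0 < B := Real.exp_pos _
  have hJB : ∀ s ∈ Ioc 0 s₁, Real.exp (F s) ≤ B := by
    intro s hs
    have hsS : s ∈ Ioo 0 S := ⟨hs.1, by linarith [hs.2, hs₁δ]⟩
    have hi1 : IntervalIntegrable (fun t => lam t / (n-m)) volume s s₁ := hint s₁ hs₁S s hsS
    have hi2 : IntervalIntegrable (fun t => -M / (n-m)) volume s s₁ :=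
      intervalIntegrable_const
    have hmono := intervalIntegral.integral_mono_on hs.2 hi2 hi1
      (fun t ht => by
        have htδ : t ∈ Ioc 0 δ := ⟨lt_of_lt_of_le hs.1 ht.1, by linarith [ht.2, hs₁δ]⟩
        have h9 := hlamM t htδ
        exact (div_le_div_iff_of_pos_right hnm).mpr h9)
    have hconst : (∫ t in s..s₁, -M/(n-m)) = (s₁ - s) * (-M/(n-m)) := by
      rw [intervalIntegral.integral_const, smul_eq_mul]
    have hFs : F s = -(∫ t in s..s₁, lam t / (n-m)) := intervalIntegral.integral_symm s s₁
    have h6 : F s ≤ M*s₁/(n-m) := by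
      rw [hFs]
      rw [hconst] at hmono
      have h7 := neg_le_neg hmono
      have e1 : -((s₁ - s) * (-M / (n - m))) = (s₁ - s) * (M / (n - m)) := by ring
      have h8 : (s₁ - s) * (M/(n-m)) ≤ s₁ * (M/(n-m)) :=
        mul_le_mul_of_nonneg_right (by linarith [hs.1]) (by positivity)
      have e2 : s₁ * (M / (n-m)) = M * s₁/(n-m) := by ring
      linarith
    exact le_trans (Real.exp_le_exp.mpr h6) (le_of_eq hBdef.symm)
  clear_value B
  -- the quantity lam*𝔰 - (n-m)*𝔰d has small values near 0
  have h𝔰d0 : Tendsto 𝔰d (𝓝[>] (0:ℝ)) (𝓝 1) := by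
    have h1 := hc𝔰d.tendsto 0
    rw [h0'] at h1
    exact h1.mono_left nhdsWithin_le_nhds
  have hD𝔰 : Tendsto (fun s => D*s*𝔰 s) (𝓝[>] (0:ℝ)) (𝓝 0) := by
    have hcn : Continuous (fun s => D*s*𝔰 s) := (continuous_const.mul continuous_id).mul hc𝔰
    have h1 := hcn.tendsto 0
    rw [show D*0*𝔰 0 = 0 by ring_nf] at h1
    exact h1.mono_left nhdsWithin_le_nhds
  have hρ : Tendsto (fun s => (n-m)*(𝔰 s/s) + D*s*𝔰 s - (n-m)*𝔰d s) (𝓝[>] (0:ℝ)) (𝓝 0) := by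
    have h1 := (hslope0.const_mul (n-m)).add hD𝔰
    have h2 := h1.sub (h𝔰d0.const_mul (n-m))
    rw [show (n-m)*1 + 0 - (n-m)*1 = 0 by ring] at h2
    exact h2
  have hψev : ∀ ε : ℝ, 0 < ε → ∀ᶠ s in 𝓝[>] (0:ℝ), lam s * 𝔰 s - (n-m)*𝔰d s ≤ ε := by
    intro ε hε
    have h1 := hρ.eventually (eventually_lt_nhds hε)
    filter_upwards [h1, Ioo_mem_nhdsGT_of_mem (⟨le_refl (0:ℝ), hδpos⟩ : (0:ℝ) ∈ Ico 0 δ)]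
      with s hs1 hs2
    have h𝔰s : 0 ≤ 𝔰 s := (h𝔰pos s hs2).le
    have hub := hupbar s ⟨hs2.1, lt_trans hs2.2 hδa₀⟩
    have h3 : lam s * 𝔰 s ≤ ((n-m)/s + D*s) * 𝔰 s := mul_le_mul_of_nonneg_right hub h𝔰s
    have h4 : ((n-m)/s + D*s) * 𝔰 s = (n-m)*(𝔰 s/s) + D*s*𝔰 s := by
      have hsne : s ≠ 0 := ne_of_gt hs2.1
      field_simp
    linarith [hs1]
  -- φ ≤ 0 on (0,δ)
  have hφle : ∀ t ∈ Ioo 0 δ, φ t ≤ 0 := by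
    intro t ht
    by_contra hpos'
    push_neg at hpos'
    have hε : 0 < φ t / (2*B) := by positivity
    have hev := hψev _ hε
    have hmem : ∀ᶠ s in 𝓝[>] (0:ℝ), s ∈ Ioo 0 (min t s₁) :=
      Ioo_mem_nhdsGT_of_mem ⟨le_refl _, lt_min ht.1 hs₁pos⟩
    obtain ⟨s, hs1, hs2⟩ := (hev.and hmem).exists
    have hst : s ≤ t := le_of_lt (lt_of_lt_of_le hs2.2 (min_le_left _ _))
    have hsδ : s ∈ Ioo 0 δ := ⟨hs2.1, lt_trans (lt_of_lt_of_le hs2.2 (min_le_right _ _)) hs₁δ⟩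
    have hmono2 := hφmono hsδ ht hst
    have hJ : Real.exp (F s) ≤ B := hJB s ⟨hs2.1, (lt_of_lt_of_le hs2.2 (min_le_right _ _)).le⟩
    rcases le_or_gt (lam s * 𝔰 s - (n-m)*𝔰d s) 0 with hcs | hcs
    · have h5 : φ s ≤ 0 := mul_nonpos_of_nonneg_of_nonpos (Real.exp_pos _).le hcs
      linarith
    · have h5 : φ s ≤ B * (φ t/(2*B)) := by
        calc φ s = Real.exp (F s) * (lam s * 𝔰 s - (n-m)*𝔰d s) := rfl
        _ ≤ B * (lam s * 𝔰 s - (n-m)*𝔰d s) := mul_le_mul_of_nonneg_right hJ hcs.le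
        _ ≤ B * (φ t/(2*B)) := mul_le_mul_of_nonneg_left hs1 hBpos.le
      have h6 : B * (φ t/(2*B)) = φ t/2 := by
        field_simp
      linarith
  have hψle : ∀ t ∈ Ioo 0 δ, lam t * 𝔰 t ≤ (n-m) * 𝔰d t := by
    intro t ht
    have h1 := hφle t ht
    have h2 : 0 < Real.exp (F t) := Real.exp_pos _
    by_contra hcc
    push_neg at hcc
    have h3 : φ t = Real.exp (F t) * (lam t * 𝔰 t - (n-m)*𝔰d t) := rfl
    linarith [mul_pos h2 (sub_pos.mpr hcc)]
  -- 𝔰d δ = 0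
  have hNBδ : (𝓝[Ioo 0 δ] δ).NeBot := by
    apply mem_closure_iff_nhdsWithin_neBot.mp
    rw [closure_Ioo (ne_of_lt hδpos)]
    exact ⟨hδpos.le, le_refl δ⟩
  have h𝔰dδ0 : 𝔰d δ = 0 := by
    have hge : 0 ≤ 𝔰d δ := by
      have hcA : ContinuousAt (fun s => (n-m)*𝔰d s - lam s * 𝔰 s) δ :=
        (continuousAt_const.mul hc𝔰d.continuousAt).sub
          ((hclam δ ⟨hδpos, hδS⟩).mul hc𝔰.continuousAt)
      have hT : Tendsto (fun s => (n-m)*𝔰d s - lam s * 𝔰 s) (𝓝[Ioo 0 δ] δ)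
          (𝓝 ((n-m)*𝔰d δ - lam δ * 𝔰 δ)) := hcA.continuousWithinAt
      have h2 : 0 ≤ (n-m)*𝔰d δ - lam δ * 𝔰 δ := ge_of_tendsto hT
        (eventually_nhdsWithin_of_forall (fun s hs => by linarith [hψle s hs]))
      rw [h𝔰δ, mul_zero, sub_zero] at h2
      by_contra hneg
      push_neg at hneg
      linarith [mul_neg_of_pos_of_neg hnm hneg]
    have hle : 𝔰d δ ≤ 0 := by
      have hsl : Tendsto (slope 𝔰 δ) (𝓝[≠] δ) (𝓝 (𝔰d δ)) :=
        hasDerivAt_iff_tendsto_slope.mp (h𝔰 δ)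
      have hsl' : Tendsto (slope 𝔰 δ) (𝓝[Ioo 0 δ] δ) (𝓝 (𝔰d δ)) :=
        hsl.mono_left (nhdsWithin_mono _ (fun t htt => ne_of_lt htt.2))
      refine le_of_tendsto hsl' (eventually_nhdsWithin_of_forall (fun t htt => ?_))
      rw [slope_def_field, h𝔰δ, sub_zero]
      exact div_nonpos_of_nonneg_of_nonpos (h𝔰pos t htt).le (by linarith [htt.2])
    linarith
  -- energy argument: uniqueness forces 𝔰 ≡ 0, contradiction
  obtain ⟨C, hC0, hC⟩ : ∃ C, 0 ≤ C ∧ ∀ t ∈ Icc (0:ℝ) δ, |1 - κ t| ≤ C := by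
    have hgc : ContinuousOn (fun t => 1 - κ t) (Icc (0:ℝ) δ) :=
      continuousOn_const.sub (hκ.mono (fun t (ht : t ∈ Icc (0:ℝ) δ) => ht.1))
    obtain ⟨C, hC⟩ := isCompact_Icc.exists_bound_of_continuousOn hgc
    refine ⟨max C 0, le_max_right _ _, fun t ht => ?_⟩
    have h9 := hC t ht
    rw [Real.norm_eq_abs] at h9
    exact le_trans h9 (le_max_left _ _)
  set e := fun s => (𝔰 s^2 + 𝔰d s^2) * Real.exp (C*s) with hedef
  have hed : ∀ s, HasDerivAt e
      ((2*𝔰 s*𝔰d s + 2*𝔰d s*(-(κ s * 𝔰 s)) + C*(𝔰 s^2 + 𝔰d s^2)) * Real.exp (C*s)) s := by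
    intro s
    have h1 : HasDerivAt (fun s => 𝔰 s^2 + 𝔰d s^2) (2*𝔰 s*𝔰d s + 2*𝔰d s*(-(κ s*𝔰 s))) s := by
      have h2 := ((h𝔰 s).pow 2).add ((h𝔰d s).pow 2)
      refine h2.congr_deriv ?_
      ring
    have h3 : HasDerivAt (fun s => Real.exp (C*s)) (Real.exp (C*s) * C) s := by
      simpa using ((hasDerivAt_id s).const_mul C).exp
    have h4 := h1.mul h3
    refine h4.congr_deriv ?_
    ring
  have hemono : MonotoneOn e (Icc 0 δ) := by
    apply monotoneOn_of_deriv_nonneg (convex_Icc 0 δ)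
    · exact fun s _ => (hed s).continuousAt.continuousWithinAt
    · intro s _
      exact (hed s).differentiableAt.differentiableWithinAt
    · intro s hs
      rw [interior_Icc] at hs
      rw [(hed s).deriv]
      have hCb := abs_le.mp (hC s ⟨hs.1.le, hs.2.le⟩)
      have key : 0 ≤ 2*𝔰 s*𝔰d s + 2*𝔰d s*(-(κ s*𝔰 s)) + C*(𝔰 s^2 + 𝔰d s^2) := by
        nlinarith [mul_nonneg (by linarith [hCb.2] : (0:ℝ) ≤ C - (1 - κ s)) (sq_nonneg (𝔰 s - 𝔰d s)),
          mul_nonneg (by linarith [hCb.1] : (0:ℝ) ≤ C + (1 - κ s)) (sq_nonneg (𝔰 s + 𝔰d s))]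
      exact mul_nonneg key (Real.exp_pos _).le
  have hfin : e 0 ≤ e δ := hemono ⟨le_refl 0, hδpos.le⟩ ⟨hδpos.le, le_refl δ⟩ hδpos.le
  simp only [hedef] at hfin
  rw [h0, h0', h𝔰δ, h𝔰dδ0] at hfin
  norm_num at hfin
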